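/- Formal δ-function identity: x_1^{-1} δ((z-y_1)/(-x_1)) · x_2^{-1} δ((z-y_2)/(-x_2)) · y_2^{-1} δ((y_1-x_0)/y_2) = x_2^{-1} δ((x_1-x_0)/x_2) · x_2^{-1} δ((z-y_2)/(-x_2)) · y_1^{-1} δ((y_2+x_0)/y_1), as formal series in x_0, x_1, x_2, y_1, y_2, z. -/
import Mathlib


/-- Generalized binomial coefficient `C(a, k) = a(a-1)⋯(a-k+1)/k!` for `a ∈ ℤ`. -/
noncomputable def gchoose (a : ℤ) (k : ℕ) : ℚ :=
  (∏ i ∈ Finset.range k, ((a : ℚ) - i)) / k.factorial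

/-- Coefficient of `u^p v^q` in `(u + s·v)^n` (`n ∈ ℤ`), expanded in nonnegative
powers of `v`. -/
noncomputable def expCoeff (n p q : ℤ) (s : ℚ) : ℚ :=
  if 0 ≤ q ∧ p = n - q then gchoose n q.toNat * s ^ q.toNat else 0

noncomputable def qch (r : ℚ) (k : ℕ) : ℚ :=
  (∏ i ∈ Finset.range k, (r - i)) / k.factorial

lemma qch_zero (r : ℚ) : qch r 0 = 1 := by simp [qch]

lemma factCast_ne (k : ℕ) : ((k.factorial : ℚ)) ≠ 0 := by
  exact_mod_cast k.factorial_ne_zero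

lemma pascal (r : ℚ) (k : ℕ) : qch (r+1) (k+1) = qch r k + qch r (k+1) := by
  have h1 : ∏ i ∈ Finset.range (k+1), (r + 1 - i) = (r+1) * ∏ i ∈ Finset.range k, (r - i) := by
    rw [Finset.prod_range_succ']
    simp only [Nat.cast_add, Nat.cast_one, Nat.cast_zero]
    rw [mul_comm]
    congr 1
    · push_cast; ring
    · apply Finset.prod_congr rfl; intro i _; push_cast; ring
  have h2 : ∏ i ∈ Finset.range (k+1), (r - i) = (∏ i ∈ Finset.range k, (r - i)) * (r - k) := by
    rw [Finset.prod_range_succ]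
  unfold qch
  rw [h1, h2, Nat.factorial_succ]
  have hk := factCast_ne k
  have hk1 : ((k:ℚ)+1) ≠ 0 := by positivity
  push_cast
  field_simp
  ring

lemma qch_neg (r : ℚ) (k : ℕ) : qch r k = (-1)^k * qch ((k:ℚ) - 1 - r) k := by
  unfold qch
  have h : ∏ i ∈ Finset.range k, ((k:ℚ) - 1 - r - i)
      = (-1)^k * ∏ i ∈ Finset.range k, (r - i) := by
    have h0 : ∏ i ∈ Finset.range k, ((k:ℚ) - 1 - r - i)
        = ∏ j ∈ Finset.range k, (((k - 1 - j : ℕ) : ℚ) - r) := by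
      apply Finset.prod_congr rfl
      intro j hj
      have hj' := Finset.mem_range.mp hj
      have : ((k - 1 - j : ℕ) : ℚ) = (k:ℚ) - 1 - j := by
        have : k - 1 - j = k - (1 + j) := by omega
        rw [this, Nat.cast_sub (by omega)]
        push_cast; ring
      rw [this]; ring
    rw [h0, Finset.prod_range_reflect (fun j => ((j:ℚ) - r)) k]
    have : ∀ j ∈ Finset.range k, ((j:ℚ) - r) = (-1) * (r - j) := by intros; ring
    rw [Finset.prod_congr rfl this, Finset.prod_mul_distrib, Finset.prod_const,
      Finset.card_range]
  rw [h, mul_div_assoc, ← mul_assoc]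
  have he : ((-1:ℚ))^k * (-1)^k = 1 := by
    rw [← pow_add]; exact Even.neg_one_pow ⟨k, rfl⟩
  rw [he, one_mul]

-- descending product equals ascending product
lemma prod_desc_eq_asc (t : ℚ) (m : ℕ) :
    ∏ i ∈ Finset.range m, (t + m - i) = ∏ i ∈ Finset.range m, (t + 1 + i) := by
  have h0 : ∏ i ∈ Finset.range m, (t + m - i)
      = ∏ j ∈ Finset.range m, (t + 1 + ((m - 1 - j : ℕ) : ℚ)) := by
    apply Finset.prod_congr rfl
    intro j hj
    have hj' := Finset.mem_range.mp hj
    have : ((m - 1 - j : ℕ) : ℚ) = (m:ℚ) - 1 - j := by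
      have : m - 1 - j = m - (1 + j) := by omega
      rw [this, Nat.cast_sub (by omega)]
      push_cast; ring
    rw [this]; ring
  rw [h0, Finset.prod_range_reflect (fun j => (t + 1 + (j:ℚ))) m]

lemma trin (r : ℚ) (c d : ℕ) :
    qch (r + c) c * qch (r + (c+d)) d = qch (r + (c+d)) (c+d) * ((c+d).choose c : ℚ) := by
  unfold qch
  have h1 : ∏ i ∈ Finset.range c, (r + (c:ℚ) - i) = ∏ i ∈ Finset.range c, (r + 1 + i) :=
    prod_desc_eq_asc r c
  have h2 : ∏ i ∈ Finset.range d, (r + ((c+d:ℕ):ℚ) - i)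
      = ∏ i ∈ Finset.range d, (r + (c:ℚ) + 1 + i) := by
    calc ∏ i ∈ Finset.range d, (r + ((c+d:ℕ):ℚ) - i)
        = ∏ i ∈ Finset.range d, ((r + c) + (d:ℚ) - i) := by
          apply Finset.prod_congr rfl; intro i _; push_cast; ring
      _ = ∏ i ∈ Finset.range d, ((r + c) + 1 + i) := prod_desc_eq_asc (r + c) d
  have h3 : ∏ i ∈ Finset.range (c+d), (r + ((c+d:ℕ):ℚ) - i)
      = (∏ i ∈ Finset.range c, (r + 1 + i)) * ∏ i ∈ Finset.range d, (r + (c:ℚ) + 1 + i) := by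
    rw [prod_desc_eq_asc r (c+d), Finset.prod_range_add]
    congr 1
    apply Finset.prod_congr rfl; intro i _; push_cast; ring
  push_cast at h2 h3 ⊢
  rw [h1, h2, h3]
  have hfact : (((c+d).choose c : ℕ) : ℚ) * (c.factorial : ℚ) * (d.factorial : ℚ)
      = ((c+d).factorial : ℚ) := by
    have := Nat.choose_mul_factorial_mul_factorial (Nat.le_add_right c d)
    rw [Nat.add_sub_cancel_left] at this
    exact_mod_cast congrArg (Nat.cast : ℕ → ℚ) this
  have hc := Nat.factorial_ne_zero c
  have hbc := Nat.factorial_ne_zero d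
  have hb := Nat.factorial_ne_zero (c+d)
  have hc' : ((c.factorial:ℚ)) ≠ 0 := by exact_mod_cast hc
  have hbc' : ((d.factorial:ℚ)) ≠ 0 := by exact_mod_cast hbc
  have hb' : (((c+d).factorial:ℚ)) ≠ 0 := by exact_mod_cast hb
  field_simp
  rw [← hfact]
  ring

-- qch = Ring.choose
lemma smeval_descPochhammer (r : ℚ) (k : ℕ) :
    (descPochhammer ℤ k).smeval r = ∏ i ∈ Finset.range k, (r - i) := by
  induction k with
  | zero => simp [descPochhammer_zero, Polynomial.smeval_one]
  | succ n ih =>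
    rw [descPochhammer_succ_right, Polynomial.smeval_mul, ih, Finset.prod_range_succ]
    congr 1
    rw [Polynomial.smeval_sub, Polynomial.smeval_X, Polynomial.smeval_natCast]
    simp

lemma qch_eq_ringChoose (r : ℚ) (k : ℕ) : qch r k = Ring.choose r k := by
  have h := Ring.descPochhammer_eq_factorial_smul_choose r k
  rw [smeval_descPochhammer] at h
  unfold qch
  have hne : ((k.factorial : ℚ)) ≠ 0 := by exact_mod_cast k.factorial_ne_zero
  rw [h, nsmul_eq_mul, mul_comm, mul_div_assoc, div_self hne, mul_one]

lemma vand_range (u v : ℚ) (M : ℕ) :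
    ∑ i ∈ Finset.range (M+1), qch u i * qch v (M - i) = qch (u + v) M := by
  simp only [qch_eq_ringChoose]
  rw [Ring.add_choose_eq M (Commute.all u v), Finset.Nat.sum_antidiagonal_eq_sum_range_succ_mk]

lemma vand' (r s : ℚ) (M : ℕ) :
    ∑ i ∈ Finset.range (M+1), qch (r + i) i * qch (s + ((M - i : ℕ):ℚ)) (M - i)
      = qch (r + s + M + 1) M := by
  have key : ∀ i ∈ Finset.range (M+1),
      qch (r + i) i * qch (s + ((M - i : ℕ):ℚ)) (M - i)
        = (-1)^M * (qch (-r-1) i * qch (-s-1) (M-i)) := by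
    intro i hi
    have him := Finset.mem_range.mp hi
    have h1 : qch (r + i) i = (-1)^i * qch (-r-1) i := by
      rw [qch_neg (r + i) i]
      congr 2
      ring
    have h2 : qch (s + ((M - i : ℕ):ℚ)) (M - i) = (-1)^(M-i) * qch (-s-1) (M-i) := by
      rw [qch_neg (s + ((M - i : ℕ):ℚ)) (M-i)]
      congr 2
      ring
    rw [h1, h2, show ((-1:ℚ))^M = (-1)^i * (-1)^(M-i) from by
      rw [← pow_add]; congr 1; omega]
    ring
  rw [Finset.sum_congr rfl key, ← Finset.mul_sum, vand_range]
  have h3 : qch (-r-1 + (-s-1)) M = (-1)^M * qch (r + s + M + 1) M := by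
    rw [qch_neg (-r-1 + (-s-1)) M]
    congr 2
    ring
  rw [h3, ← mul_assoc, ← pow_add]
  have : Even (M + M) := ⟨M, rfl⟩
  rw [this.neg_one_pow, one_mul]

noncomputable def qchE (r : ℚ) (k : ℤ) : ℚ := if 0 ≤ k then qch r k.toNat else 0

lemma pascalE (r : ℚ) (k : ℤ) : qchE r k = qchE (r-1) (k-1) + qchE (r-1) k := by
  rcases lt_or_ge k 0 with hk | hk
  · rw [qchE, qchE, qchE, if_neg (by omega), if_neg (by omega), if_neg (by omega)]
    norm_num
  · lift k to ℕ using hk with j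
    cases j with
    | zero =>
      norm_num [qchE, qch_zero]
    | succ n =>
      rw [qchE, qchE, qchE, if_pos (by omega), if_pos (by omega), if_pos (by omega)]
      have h1 : ((n+1 : ℕ) : ℤ).toNat = n + 1 := by omega
      have h2 : (((n+1 : ℕ) : ℤ) - 1).toNat = n := by omega
      rw [h1, h2]
      have := pascal (r - 1) n
      rw [sub_add_cancel] at this
      exact this

lemma alt_sum_step (f : ℕ → ℚ) (β : ℕ) :
    ∑ c ∈ Finset.range (β+2), (-1:ℚ)^c * ((β+1).choose c) * f c
      = (∑ c ∈ Finset.range (β+1), (-1:ℚ)^c * (β.choose c) * f c)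
        - ∑ c ∈ Finset.range (β+1), (-1:ℚ)^c * (β.choose c) * f (c+1) := by
  rw [Finset.sum_range_succ' (fun c => (-1:ℚ)^c * ((β+1).choose c) * f c) (β+1)]
  have h1 : ∀ c ∈ Finset.range (β+1),
      (-1:ℚ)^(c+1) * ((β+1).choose (c+1)) * f (c+1)
        = -((-1:ℚ)^c * (β.choose c) * f (c+1)) + (-1:ℚ)^(c+1) * (β.choose (c+1)) * f (c+1) := by
    intro c _
    rw [Nat.choose_succ_succ]
    push_cast
    ring
  rw [Finset.sum_congr rfl h1, Finset.sum_add_distrib]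
  have h2 : ∑ c ∈ Finset.range (β+1), (-1:ℚ)^(c+1) * (β.choose (c+1)) * f (c+1)
      = (∑ c ∈ Finset.range (β+1), (-1:ℚ)^c * (β.choose c) * f c)
        - (-1:ℚ)^0 * (β.choose 0) * f 0 := by
    rw [eq_sub_iff_add_eq]
    have := (Finset.sum_range_succ' (fun c => (-1:ℚ)^c * (β.choose c) * f c) (β+1)).symm
    rw [Finset.sum_range_succ (fun c => (-1:ℚ)^c * (β.choose c) * f c) (β+1)] at this
    rw [this, Nat.choose_succ_self]
    push_cast
    ring
  rw [h2]
  simp only [Nat.choose_zero_right, pow_zero, Nat.cast_one, one_mul, mul_one]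
  rw [Finset.sum_neg_distrib]
  ring

lemma II' (β : ℕ) : ∀ (z : ℚ) (k : ℤ),
    ∑ c ∈ Finset.range (β+1), (-1:ℚ)^c * (β.choose c) * qchE (z + k - c) (k - c)
      = qchE (z + k - β) k := by
  induction β with
  | zero => intro z k; simp
  | succ n ih =>
    intro z k
    rw [show n + 1 + 1 = n + 2 from rfl,
      alt_sum_step (fun c => qchE (z + k - c) (k - c)) n]
    rw [ih z k]
    have h2' := ih z (k-1)
    have e : ∀ c ∈ Finset.range (n+1),
        (-1:ℚ)^c * (n.choose c) * qchE (z + (k:ℚ) - ((c+1 : ℕ):ℚ)) (k - ((c+1:ℕ):ℤ))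
          = (-1:ℚ)^c * (n.choose c) * qchE (z + ((k-1 : ℤ):ℚ) - (c:ℚ)) ((k-1) - (c:ℤ)) := by
      intro c _
      have e1 : z + (k:ℚ) - ((c+1 : ℕ):ℚ) = z + ((k-1 : ℤ):ℚ) - (c:ℚ) := by push_cast; ring
      have e2 : k - ((c+1:ℕ):ℤ) = (k-1) - (c:ℤ) := by push_cast; ring
      rw [e1, e2]
    rw [Finset.sum_congr rfl e, h2']
    have hp := pascalE (z + (k:ℚ) - (n:ℚ)) k
    rw [show z + (k:ℚ) - (n:ℚ) - 1 = z + ((k-1:ℤ):ℚ) - (n:ℚ) from by push_cast; ring] at hp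
    rw [show z + (k:ℚ) - ((n+1 : ℕ):ℚ) = z + ((k-1:ℤ):ℚ) - (n:ℚ) from by push_cast; ring]
    linarith [hp]

lemma qchE_natCast (r : ℚ) (m : ℕ) : qchE r (m:ℤ) = qch r m := by
  rw [qchE, if_pos (by positivity), Int.toNat_natCast]

lemma idI (x y z : ℚ) (n m : ℕ) :
    ∑ β ∈ Finset.range (n+1),
        qch (x + β) β * qch (y + ((n - β : ℕ):ℚ)) (n - β) * qch (z + m - β) m
      = ∑ c ∈ Finset.range (n+1),
          (-1:ℚ)^c * qch (x + c) c * qch (x + y + n + 1) (n - c)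
            * qchE (z + m - c) ((m:ℤ) - c) := by
  have hR : ∀ c ∈ Finset.range (n+1),
      (-1:ℚ)^c * qch (x + c) c * qch (x + y + n + 1) (n - c) * qchE (z + m - c) ((m:ℤ) - c)
        = ∑ i ∈ Finset.range (n - c + 1),
            (-1:ℚ)^c * qch (x + c) c * (qch (x + c + i) i * qch (y + ((n - c - i : ℕ):ℚ)) (n - c - i))
              * qchE (z + m - c) ((m:ℤ) - c) := by
    intro c hc
    have hcn := Finset.mem_range.mp hc
    have hv := vand' (x + c) y (n - c)
    have harg : x + c + y + ((n - c : ℕ):ℚ) + 1 = x + y + n + 1 := by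
      rw [Nat.cast_sub (by omega)]
      ring
    rw [harg] at hv
    rw [← hv, Finset.mul_sum, Finset.sum_mul]
  rw [Finset.sum_congr rfl hR]
  have hL : ∀ β ∈ Finset.range (n+1),
      qch (x + β) β * qch (y + ((n - β : ℕ):ℚ)) (n - β) * qch (z + m - β) m
        = ∑ c ∈ Finset.range (β+1),
            (-1:ℚ)^c * qch (x + c) c * (qch (x + β) (β - c) * qch (y + ((n - β : ℕ):ℚ)) (n - β))
              * qchE (z + m - c) ((m:ℤ) - c) := by
    intro β hβ
    have hβn := Finset.mem_range.mp hβ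
    have key : ∀ c ∈ Finset.range (β+1),
        (-1:ℚ)^c * qch (x + c) c * (qch (x + β) (β - c) * qch (y + ((n - β : ℕ):ℚ)) (n - β))
            * qchE (z + m - c) ((m:ℤ) - c)
          = qch (x + β) β * qch (y + ((n - β : ℕ):ℚ)) (n - β)
              * ((-1:ℚ)^c * (β.choose c) * qchE (z + m - c) ((m:ℤ) - c)) := by
      intro c hc
      have hcβ : c ≤ β := by have := Finset.mem_range.mp hc; omega
      have ht := trin x c (β - c)
      rw [show ((c:ℚ) + ((β - c : ℕ):ℚ)) = (β:ℚ) from by rw [Nat.cast_sub hcβ]; ring,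
        show c + (β - c) = β from by omega] at ht
      calc (-1:ℚ)^c * qch (x + c) c * (qch (x + β) (β - c) * qch (y + ((n - β : ℕ):ℚ)) (n - β))
            * qchE (z + m - c) ((m:ℤ) - c)
          = (qch (x + c) c * qch (x + β) (β - c)) * qch (y + ((n - β : ℕ):ℚ)) (n - β)
            * ((-1:ℚ)^c * qchE (z + m - c) ((m:ℤ) - c)) := by ring
        _ = (qch (x + β) β * (β.choose c : ℚ)) * qch (y + ((n - β : ℕ):ℚ)) (n - β)
            * ((-1:ℚ)^c * qchE (z + m - c) ((m:ℤ) - c)) := by rw [ht]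
        _ = qch (x + β) β * qch (y + ((n - β : ℕ):ℚ)) (n - β)
              * ((-1:ℚ)^c * (β.choose c) * qchE (z + m - c) ((m:ℤ) - c)) := by ring
    rw [Finset.sum_congr rfl key, ← Finset.mul_sum]
    have hII := II' β z (m:ℤ)
    push_cast at hII
    rw [hII]
    rw [qchE_natCast]
  rw [Finset.sum_congr rfl hL]
  rw [Finset.sum_sigma', Finset.sum_sigma']
  apply Finset.sum_nbij' (i := fun p => (⟨p.2, p.1 - p.2⟩ : Σ _ : ℕ, ℕ))
    (j := fun q => (⟨q.1 + q.2, q.1⟩ : Σ _ : ℕ, ℕ))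
  · intro a ha
    simp only [Finset.mem_sigma, Finset.mem_range] at ha ⊢
    omega
  · intro a ha
    simp only [Finset.mem_sigma, Finset.mem_range] at ha ⊢
    omega
  · intro a ha
    simp only [Finset.mem_sigma, Finset.mem_range] at ha
    have : a.2 + (a.1 - a.2) = a.1 := by omega
    exact Sigma.ext (by simp [this]) (by simp)
  · intro a ha
    simp only [Finset.mem_sigma, Finset.mem_range] at ha
    exact Sigma.ext (by simp) (by simp [Nat.add_sub_cancel_left])
  · intro a ha
    simp only [Finset.mem_sigma, Finset.mem_range] at ha
    obtain ⟨h1, h2⟩ := ha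
    have e1 : x + (a.2:ℚ) + ((a.1 - a.2 : ℕ):ℚ) = x + (a.1:ℚ) := by
      rw [Nat.cast_sub (by omega)]; ring
    have e2 : n - a.2 - (a.1 - a.2) = n - a.1 := by omega
    simp only [e1, e2]

lemma gchoose_eq_qch (a : ℤ) (k : ℕ) : gchoose a k = qch (a:ℚ) k := rfl

lemma expCoeff_zero {n p q : ℤ} {s : ℚ} (h : ¬(0 ≤ q ∧ p = n - q)) :
    expCoeff n p q s = 0 := by
  rw [expCoeff, if_neg h]

lemma expCoeff_eval (nn p : ℤ) (q : ℕ) (s : ℚ) (h : p = nn - (q:ℤ)) :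
    expCoeff nn p (q:ℤ) s = qch (nn:ℚ) q * s ^ q := by
  rw [expCoeff, if_pos ⟨Int.natCast_nonneg q, h⟩, Int.toNat_natCast, gchoose_eq_qch]

lemma sq_kill (k : ℕ) (q : ℚ) : (-1:ℚ)^k * q * (-1)^k = q := by
  have h : (-1:ℚ)^k * (-1)^k = 1 := by
    rw [← pow_add]; exact Even.neg_one_pow ⟨k, rfl⟩
  rw [mul_comm ((-1:ℚ)^k) q, mul_assoc, h, mul_one]

lemma expCoeff_flip (a p : ℤ) (β : ℕ) (h : p = -a-1-(β:ℤ)) :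
    expCoeff (-a-1) p (β:ℤ) (-1) = qch ((a:ℚ) + β) β := by
  rw [expCoeff_eval (-a-1) p β (-1) (by omega), qch_neg ((-a-1 : ℤ):ℚ) β,
    show ((β:ℚ) - 1 - ((-a-1 : ℤ):ℚ)) = (a:ℚ) + β from by push_cast; ring,
    sq_kill]

lemma neg_one_zpow_natCast (c : ℕ) : (-1:ℚ)^((c:ℕ):ℤ) = (-1)^c := zpow_natCast _ _

lemma neg_one_zpow_neg_natCast (c : ℕ) : (-1:ℚ)^(-(c:ℤ)) = (-1)^c := by
  rw [zpow_neg, zpow_natCast, ← inv_pow, inv_neg, inv_one]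

lemma neg_one_zpow_add (a b : ℤ) : (-1:ℚ)^(a+b) = (-1)^a * (-1)^b :=
  zpow_add₀ (by norm_num) a b

lemma qchE_sub (r : ℚ) {c m : ℕ} (h : c ≤ m) : qchE r ((m:ℤ) - c) = qch r (m - c) := by
  rw [qchE, if_pos (by omega), show ((m:ℤ) - c).toNat = m - c from by omega]


/-- Formal δ-function identity
`x₁⁻¹ δ((z-y₁)/(-x₁)) · x₂⁻¹ δ((z-y₂)/(-x₂)) · y₂⁻¹ δ((y₁-x₀)/y₂)
 = x₂⁻¹ δ((x₁-x₀)/x₂) · x₂⁻¹ δ((z-y₂)/(-x₂)) · y₁⁻¹ δ((y₂+x₀)/y₁)`,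
with `δ(x) = ∑_{n∈ℤ} xⁿ`, binomials expanded in nonnegative powers of the
second-listed variable, and `(-x)ⁿ = (-1)ⁿ xⁿ`.  Stated coefficientwise for the
monomial `x₀^{e₀} x₁^{e₁} x₂^{e₂} y₁^{f₁} y₂^{f₂} z^{g}`. -/
theorem delta_three_factor_identity_II :
    ∀ e0 e1 e2 f1 f2 g : ℤ,
      (∑ᶠ (γ1 : ℤ) (β1 : ℤ) (β2 : ℤ),
        ((-1 : ℚ) ^ (-e1 - 1)) * expCoeff (-e1 - 1) γ1 β1 (-1) *
          (((-1 : ℚ) ^ (-e2 - 1)) * expCoeff (-e2 - 1) (g - γ1) β2 (-1)) *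
          expCoeff (-(f2 - β2) - 1) (f1 - β1) e0 (-1))
      = ∑ᶠ (a : ℤ) (c : ℤ) (b : ℤ),
          expCoeff (-a - 1) e1 c (-1) *
            (((-1 : ℚ) ^ (-(e2 - a) - 1)) * expCoeff (-(e2 - a) - 1) g b (-1)) *
            expCoeff (-f1 - 1) (f2 - b) (e0 - c) 1 := by
  intro e0 e1 e2 f1 f2 g
  set A : ℤ := g + e2 + 1 with hA
  set B : ℤ := -e1 - 1 with hB
  -- the collapsed left summand
  set Lf : ℤ → ℚ := fun γ =>
    ((-1 : ℚ) ^ (-e1 - 1)) * expCoeff (-e1 - 1) γ (-e1-1-γ) (-1) *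
      (((-1 : ℚ) ^ (-e2 - 1)) * expCoeff (-e2 - 1) (g - γ) (γ-g-e2-1) (-1)) *
      expCoeff (-(f2 - (γ-g-e2-1)) - 1) (f1 - (-e1-1-γ)) e0 (-1) with hLf
  set Rf : ℤ → ℚ := fun a =>
    expCoeff (-a - 1) e1 (-a-1-e1) (-1) *
      (((-1 : ℚ) ^ (-(e2 - a) - 1)) * expCoeff (-(e2 - a) - 1) g (-(e2-a)-1-g) (-1)) *
      expCoeff (-f1 - 1) (f2 - (-(e2-a)-1-g)) (e0 - (-a-1-e1)) 1 with hRf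
  have hLcollapse : (∑ᶠ (γ1 : ℤ) (β1 : ℤ) (β2 : ℤ),
        ((-1 : ℚ) ^ (-e1 - 1)) * expCoeff (-e1 - 1) γ1 β1 (-1) *
          (((-1 : ℚ) ^ (-e2 - 1)) * expCoeff (-e2 - 1) (g - γ1) β2 (-1)) *
          expCoeff (-(f2 - β2) - 1) (f1 - β1) e0 (-1))
      = ∑ᶠ (γ1 : ℤ), Lf γ1 := by
    apply finsum_congr
    intro γ1
    have s1 : ∀ β1 : ℤ, (∑ᶠ (β2 : ℤ),
        ((-1 : ℚ) ^ (-e1 - 1)) * expCoeff (-e1 - 1) γ1 β1 (-1) *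
          (((-1 : ℚ) ^ (-e2 - 1)) * expCoeff (-e2 - 1) (g - γ1) β2 (-1)) *
          expCoeff (-(f2 - β2) - 1) (f1 - β1) e0 (-1))
        = ((-1 : ℚ) ^ (-e1 - 1)) * expCoeff (-e1 - 1) γ1 β1 (-1) *
          (((-1 : ℚ) ^ (-e2 - 1)) * expCoeff (-e2 - 1) (g - γ1) (γ1-g-e2-1) (-1)) *
          expCoeff (-(f2 - (γ1-g-e2-1)) - 1) (f1 - β1) e0 (-1) := by
      intro β1
      apply finsum_eq_single _ (γ1 - g - e2 - 1)
      intro x hx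
      rw [expCoeff_zero (n := -e2-1) (fun ⟨_, hh⟩ => hx (by omega))]
      ring
    rw [finsum_congr s1]
    apply finsum_eq_single _ (-e1-1-γ1)
    intro x hx
    rw [expCoeff_zero (n := -e1-1) (fun ⟨_, hh⟩ => hx (by omega))]
    ring
  have hRcollapse : (∑ᶠ (a : ℤ) (c : ℤ) (b : ℤ),
          expCoeff (-a - 1) e1 c (-1) *
            (((-1 : ℚ) ^ (-(e2 - a) - 1)) * expCoeff (-(e2 - a) - 1) g b (-1)) *
            expCoeff (-f1 - 1) (f2 - b) (e0 - c) 1)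
      = ∑ᶠ (a : ℤ), Rf a := by
    apply finsum_congr
    intro a
    have s1 : ∀ c : ℤ, (∑ᶠ (b : ℤ),
          expCoeff (-a - 1) e1 c (-1) *
            (((-1 : ℚ) ^ (-(e2 - a) - 1)) * expCoeff (-(e2 - a) - 1) g b (-1)) *
            expCoeff (-f1 - 1) (f2 - b) (e0 - c) 1)
        = expCoeff (-a - 1) e1 c (-1) *
            (((-1 : ℚ) ^ (-(e2 - a) - 1)) * expCoeff (-(e2 - a) - 1) g (-(e2-a)-1-g) (-1)) *
            expCoeff (-f1 - 1) (f2 - (-(e2-a)-1-g)) (e0 - c) 1 := by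
      intro c
      apply finsum_eq_single _ (-(e2-a)-1-g)
      intro x hx
      rw [expCoeff_zero (n := -(e2-a)-1) (fun ⟨_, hh⟩ => hx (by omega))]
      ring
    rw [finsum_congr s1]
    apply finsum_eq_single _ (-a-1-e1)
    intro x hx
    rw [expCoeff_zero (n := -a-1) (fun ⟨_, hh⟩ => hx (by omega))]
    ring
  rw [hLcollapse, hRcollapse]
  have hLsum : (∑ᶠ (γ1 : ℤ), Lf γ1) = ∑ γ ∈ Finset.Icc A B, Lf γ := by
    apply finsum_eq_finset_sum_of_support_subset
    intro γ hγ
    simp only [Function.mem_support] at hγ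
    simp only [Finset.coe_Icc, Set.mem_Icc]
    by_contra hc
    push_neg at hc
    apply hγ
    rcases lt_or_ge γ A with h | h
    · rw [hLf]
      simp only
      rw [expCoeff_zero (n := -e2-1) (fun ⟨h0, _⟩ => by omega)]
      ring
    · have hBγ : B < γ := hc h
      rw [hLf]
      simp only
      rw [expCoeff_zero (n := -e1-1) (fun ⟨h0, _⟩ => by omega)]
      ring
  have hRsum : (∑ᶠ (a : ℤ), Rf a) = ∑ γ ∈ Finset.Icc A B, Rf γ := by
    apply finsum_eq_finset_sum_of_support_subset
    intro γ hγ
    simp only [Function.mem_support] at hγ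
    simp only [Finset.coe_Icc, Set.mem_Icc]
    by_contra hc
    push_neg at hc
    apply hγ
    rcases lt_or_ge γ A with h | h
    · rw [hRf]
      simp only
      rw [expCoeff_zero (n := -(e2-γ)-1) (fun ⟨h0, _⟩ => by omega)]
      ring
    · have hBγ : B < γ := hc h
      rw [hRf]
      simp only
      rw [expCoeff_zero (n := -γ-1) (fun ⟨h0, _⟩ => by omega)]
      ring
  rw [hLsum, hRsum]
  by_cases hmain : 0 ≤ e0 ∧ -e1-e2-g-2 = f1+f2+e0+1
  · -- main case
    obtain ⟨he0, hNT⟩ := hmain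
    rcases le_or_gt A B with hAB | hAB
    swap
    · rw [Finset.Icc_eq_empty (by omega)]
      simp
    · set n : ℕ := (B - A).toNat with hn
      have hnn : (n:ℤ) = B - A := Int.toNat_of_nonneg (by omega)
      set m : ℕ := e0.toNat with hm
      have hmn : (m:ℤ) = e0 := Int.toNat_of_nonneg he0
      have convL : ∑ γ ∈ Finset.Icc A B, Lf γ = ∑ β ∈ Finset.range (n+1), Lf (B - (β:ℤ)) := by
        apply Finset.sum_nbij' (i := fun γ => (B - γ).toNat) (j := fun β => B - (β:ℤ))
        · intro γ hγ
          simp only [Finset.mem_Icc] at hγ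
          simp only [Finset.mem_range]
          omega
        · intro β hβ
          simp only [Finset.mem_range] at hβ
          simp only [Finset.mem_Icc]
          omega
        · intro γ hγ
          simp only [Finset.mem_Icc] at hγ
          omega
        · intro β hβ
          simp only [Finset.mem_range] at hβ
          omega
        · intro γ hγ
          simp only [Finset.mem_Icc] at hγ
          exact congrArg Lf (by omega)
      have convR : ∑ γ ∈ Finset.Icc A B, Rf γ = ∑ c ∈ Finset.range (n+1), Rf (B - (c:ℤ)) := by
        apply Finset.sum_nbij' (i := fun γ => (B - γ).toNat) (j := fun c => B - (c:ℤ))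
        · intro γ hγ
          simp only [Finset.mem_Icc] at hγ
          simp only [Finset.mem_range]
          omega
        · intro β hβ
          simp only [Finset.mem_range] at hβ
          simp only [Finset.mem_Icc]
          omega
        · intro γ hγ
          simp only [Finset.mem_Icc] at hγ
          omega
        · intro β hβ
          simp only [Finset.mem_range] at hβ
          omega
        · intro γ hγ
          simp only [Finset.mem_Icc] at hγ
          exact congrArg Rf (by omega)
      rw [convL, convR]
      set S : ℚ := (-1:ℚ)^(-e1-1) * (-1:ℚ)^(-e2-1) * (-1:ℚ)^(m:ℕ) with hS
      have perL : ∀ β ∈ Finset.range (n+1),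
          Lf (B - (β:ℤ)) = S * (qch ((e1:ℚ) + β) β * qch ((e2:ℚ) + ((n - β : ℕ):ℚ)) (n - β)
            * qch ((f1:ℚ) + m - β) m) := by
        intro β hβ
        have hβn : β ≤ n := by
          have := Finset.mem_range.mp hβ; omega
        simp only [hLf]
        rw [show -e1-1-(B - (β:ℤ)) = (β:ℤ) from by omega]
        rw [show (B - (β:ℤ)) - g - e2 - 1 = ((n - β : ℕ):ℤ) from by omega]
        rw [expCoeff_flip e1 (B - (β:ℤ)) β (by omega)]
        rw [expCoeff_flip e2 (g - (B - (β:ℤ))) (n - β) (by omega)]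
        rw [← hmn]
        rw [expCoeff_eval (-(f2 - ((n - β : ℕ):ℤ)) - 1) (f1 - (β:ℤ)) m (-1) (by omega)]
        rw [show ((-(f2 - ((n - β : ℕ):ℤ)) - 1 : ℤ):ℚ) = (f1:ℚ) + m - β from by
          rw [show (-(f2 - ((n - β : ℕ):ℤ)) - 1 : ℤ) = f1 + m - β from by omega]
          push_cast; ring]
        rw [hS]
        ring
      have perR : ∀ c ∈ Finset.range (n+1),
          Rf (B - (c:ℤ)) = S * ((-1:ℚ)^c * qch ((e1:ℚ) + c) c
            * qch ((e1:ℚ) + (e2:ℚ) + n + 1) (n - c)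
            * qchE ((f1:ℚ) + m - c) ((m:ℤ) - c)) := by
        intro c hc
        have hcn : c ≤ n := by
          have := Finset.mem_range.mp hc; omega
        simp only [hRf]
        rw [show -(B - (c:ℤ)) - 1 - e1 = (c:ℤ) from by omega]
        rw [show -(B - (c:ℤ)) - 1 = e1 + (c:ℤ) from by omega]
        rw [show -(e2 - (B - (c:ℤ))) - 1 = -e1 - e2 - 2 - (c:ℤ) from by omega]
        rw [expCoeff_eval (e1 + (c:ℤ)) e1 c (-1) (by omega)]
        rw [show ((e1 + (c:ℤ) : ℤ):ℚ) = (e1:ℚ) + c from by push_cast; ring]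
        rw [show -e1 - e2 - 2 - (c:ℤ) - g = ((n - c : ℕ):ℤ) from by omega]
        rw [expCoeff_eval (-e1 - e2 - 2 - (c:ℤ)) g (n - c) (-1) (by omega)]
        rw [qch_neg ((-e1 - e2 - 2 - (c:ℤ) : ℤ):ℚ) (n - c)]
        rw [show ((n - c : ℕ):ℚ) - 1 - ((-e1 - e2 - 2 - (c:ℤ) : ℤ):ℚ)
            = (e1:ℚ) + (e2:ℚ) + n + 1 from by
          push_cast [Nat.cast_sub hcn]; ring]
        rcases le_or_gt c m with hcm | hcm
        · rw [show e0 - (c:ℤ) = ((m - c : ℕ):ℤ) from by omega]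
          rw [expCoeff_eval (-f1 - 1) (f2 - ((n - c : ℕ):ℤ)) (m - c) 1 (by omega)]
          rw [qch_neg ((-f1 - 1 : ℤ):ℚ) (m - c)]
          rw [show ((m - c : ℕ):ℚ) - 1 - ((-f1 - 1 : ℤ):ℚ) = (f1:ℚ) + m - c from by
            push_cast [Nat.cast_sub hcm]; ring]
          rw [qchE_sub _ hcm]
          have hsign : (-1:ℚ)^(-e1 - e2 - 2 - (c:ℤ)) * (-1:ℚ)^((m - c : ℕ))
              = (-1:ℚ)^(-e1-1) * (-1:ℚ)^(-e2-1) * (-1:ℚ)^(m:ℕ) := by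
            rw [show (-e1 - e2 - 2 - (c:ℤ)) = (-e1-1) + ((-e2-1) + (-(c:ℤ))) from by ring,
              neg_one_zpow_add, neg_one_zpow_add, neg_one_zpow_neg_natCast]
            rw [show ((-1:ℚ))^(m:ℕ) = (-1:ℚ)^c * (-1:ℚ)^((m - c : ℕ)) from by
              rw [← pow_add]; congr 1; omega]
            ring
          rw [hS]
          rw [one_pow]
          have hsq : ((-1:ℚ))^(n-c) * ((-1:ℚ))^(n-c) = 1 := by
            rw [← pow_add]; exact Even.neg_one_pow ⟨n-c, rfl⟩
          linear_combination ((-1:ℚ)^c * qch ((e1:ℚ) + c) c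
            * qch ((e1:ℚ) + (e2:ℚ) + n + 1) (n - c) * qch ((f1:ℚ) + m - c) (m - c)) * hsign
            + (qch ((e1:ℚ) + c) c * qch ((e1:ℚ) + (e2:ℚ) + n + 1) (n - c)
              * qch ((f1:ℚ) + m - c) (m - c) * (-1:ℚ)^c * (-1:ℚ)^((m - c : ℕ))
              * (-1:ℚ)^(-e1 - e2 - 2 - (c:ℤ))) * hsq
        · rw [expCoeff_zero (n := -f1-1) (q := e0 - (c:ℤ)) (fun ⟨h0, _⟩ => by omega)]
          rw [show qchE ((f1:ℚ) + m - c) ((m:ℤ) - c) = 0 from by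
            rw [qchE, if_neg (by omega)]]
          ring
      rw [Finset.sum_congr rfl perL, Finset.sum_congr rfl perR,
        ← Finset.mul_sum, ← Finset.mul_sum, idI]
  · -- degenerate case
    have hz1 : ∀ γ ∈ Finset.Icc A B, Lf γ = 0 := by
      intro γ _
      simp only [hLf]
      rw [expCoeff_zero (n := -(f2 - (γ-g-e2-1)) - 1) (q := e0)
        (fun ⟨h0, heq⟩ => hmain ⟨h0, by omega⟩)]
      ring
    have hz2 : ∀ γ ∈ Finset.Icc A B, Rf γ = 0 := by
      intro γ _
      simp only [hRf]
      by_cases hcge : 0 ≤ -γ - 1 - e1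
      · rw [expCoeff_zero (n := -f1-1) (q := e0 - (-γ-1-e1))
          (fun ⟨h0, heq⟩ => hmain ⟨by omega, by omega⟩)]
        ring
      · rw [expCoeff_zero (n := -γ-1) (q := -γ-1-e1) (fun ⟨h0, _⟩ => hcge h0)]
        ring
    rw [Finset.sum_eq_zero hz1, Finset.sum_eq_zero hz2]
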